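/- Let P be a finite graded poset with unique minimum element 0̂ and unique maximum element 1̂, such that the bottom tree and top tree of P have nonempty intersection. Suppose V is an increasing tableau of height z on P with D T(V) = D T(ψ(V)), i.e., V and its K-promotion agree on the doubletree of P. Then z = rank(P) + 1 and V is the unique minimal tableau, which labels each element x by one plus the length of the longest chain ending at x. -/

import Mathlib

open Classical in
/-- One swapping step of `K`-promotion: on each connected component of the Hasse
diagram of `P` restricted to elements labeled `1` or `i` that contains both labels,
swap the labels `1` and `i`. -/
noncomputable def kstep {P : Type*} [PartialOrder P] (i : ℕ) (T : P → ℕ) : P → ℕ :=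
  fun p =>
    if T p = 1 ∧ ∃ y, Relation.ReflTransGen
        (fun x z => (x ⋖ z ∨ z ⋖ x) ∧ (T x = 1 ∨ T x = i) ∧ (T z = 1 ∨ T z = i)) p y ∧
        T y = i then i
    else if T p = i ∧ ∃ y, Relation.ReflTransGen
        (fun x z => (x ⋖ z ∨ z ⋖ x) ∧ (T x = 1 ∨ T x = i) ∧ (T z = 1 ∨ T z = i)) p y ∧
        T y = 1 then 1
    else T p

open Classical in
/-- `K`-promotion of an increasing tableau of height `q`: perform the swapping steps
for `i = 2, …, q` in order, then cyclically decrement all labels (`1 ↦ q`,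
`j ↦ j - 1` otherwise). -/
noncomputable def kpromo {P : Type*} [PartialOrder P] (q : ℕ) (T : P → ℕ) : P → ℕ :=
  fun p =>
    if (List.range' 2 (q - 1)).foldl (fun S i => kstep i S) T p = 1 then q
    else (List.range' 2 (q - 1)).foldl (fun S i => kstep i S) T p - 1

namespace KPromoAux

variable {P : Type*} [PartialOrder P]

noncomputable def Tf (V : P → ℕ) (j : ℕ) : P → ℕ :=
  (List.range' 2 (j - 1)).foldl (fun S i => kstep i S) V

lemma Tf_zero (V : P → ℕ) : Tf V 0 = V := by simp [Tf]

lemma Tf_one (V : P → ℕ) : Tf V 1 = V := by simp [Tf]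

lemma Tf_succ (V : P → ℕ) (j : ℕ) (hj : 1 ≤ j) :
    Tf V (j + 1) = kstep (j + 1) (Tf V j) := by
  have h1 : j + 1 - 1 = (j - 1) + 1 := by omega
  have h2 : 2 + 1 * (j - 1) = j + 1 := by omega
  rw [Tf, Tf, h1, List.range'_concat, h2, List.foldl_append, List.foldl_cons, List.foldl_nil]

lemma kstep_cases (i : ℕ) (T : P → ℕ) (p : P) :
    kstep i T p = T p ∨
    (T p = 1 ∧ kstep i T p = i ∧ ∃ y, Relation.ReflTransGen
        (fun x z => (x ⋖ z ∨ z ⋖ x) ∧ (T x = 1 ∨ T x = i) ∧ (T z = 1 ∨ T z = i)) p y ∧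
        T y = i) ∨
    (T p = i ∧ kstep i T p = 1 ∧ ∃ y, Relation.ReflTransGen
        (fun x z => (x ⋖ z ∨ z ⋖ x) ∧ (T x = 1 ∨ T x = i) ∧ (T z = 1 ∨ T z = i)) p y ∧
        T y = 1) := by
  unfold kstep
  split_ifs with h1 h2
  · exact Or.inr (Or.inl ⟨h1.1, rfl, h1.2⟩)
  · exact Or.inr (Or.inr ⟨h2.1, rfl, h2.2⟩)
  · exact Or.inl rfl

lemma kstep_fill (i : ℕ) (T : P → ℕ) (p : P) (h1 : T p = 1)
    (h2 : ∃ y, Relation.ReflTransGen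
        (fun x z => (x ⋖ z ∨ z ⋖ x) ∧ (T x = 1 ∨ T x = i) ∧ (T z = 1 ∨ T z = i)) p y ∧
        T y = i) : kstep i T p = i := by
  unfold kstep
  rw [if_pos ⟨h1, h2⟩]

variable [OrderBot P]

lemma main_inv (V : P → ℕ) (hone : ∀ p, 1 ≤ V p) (hmono : ∀ x y : P, x < y → V x < V y)
    (j : ℕ) (hj : 1 ≤ j) :
    (∀ p, j < V p → Tf V j p = V p) ∧
    (∀ p, Tf V j p = 1 → V p ≤ j) ∧
    (∀ p, Tf V j p ≠ 1 → Tf V j p ≠ V p → V p < Tf V j p ∧ Tf V j p ≤ j) ∧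
    (∀ p q : P, p ⋖ q → Tf V j p = 1 → Tf V j q = 1 → False) ∧
    (∀ p, Tf V j p = 1 → p ≠ ⊥ → ∃ w, w ⋖ p ∧ Tf V (V p - 1) w = 1) ∧
    (∀ p, Tf V j p ≠ 1 → Tf V j p ≠ V p →
       Tf V (Tf V j p - 1) p = 1 ∧ Tf V (Tf V j p) p = Tf V j p) := by
  induction j, hj using Nat.le_induction with
  | base =>
    have hT : ∀ p : P, Tf V 1 p = V p := fun p => by rw [Tf_one]
    refine ⟨fun p _ => hT p, fun p h => ?_, fun p h1 h2 => absurd (hT p) h2,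
      fun p q hpq hp hq => ?_, fun p hp hpb => ?_, fun p h1 h2 => absurd (hT p) h2⟩
    · rw [hT p] at h; omega
    · rw [hT p] at hp; rw [hT q] at hq
      have := hmono p q hpq.lt; omega
    · exfalso
      rw [hT p] at hp
      have h1 := hmono ⊥ p (bot_lt_iff_ne_bot.mpr hpb)
      have := hone ⊥
      omega
  | succ j hj ih =>
    obtain ⟨ih1, ih2, ih3, ih4, ih5, ih6⟩ := ih
    have hval : ∀ w, Tf V j w = j + 1 → V w = j + 1 := by
      intro w hw
      by_contra hne
      have h1 : Tf V j w ≠ 1 := by rw [hw]; omega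
      have h2 : Tf V j w ≠ V w := by rw [hw]; exact fun h => hne h.symm
      have := (ih3 w h1 h2).2
      rw [hw] at this; omega
    rw [Tf_succ V j hj]
    refine ⟨?_, ?_, ?_, ?_, ?_, ?_⟩
    · -- I1
      intro p hp
      have hTp := ih1 p (by omega)
      rcases kstep_cases (j+1) (Tf V j) p with h | ⟨h1, h2, _⟩ | ⟨h1, h2, _⟩
      · rw [h, hTp]
      · rw [hTp] at h1; omega
      · rw [hTp] at h1; omega
    · -- I2
      intro p hp
      rcases kstep_cases (j+1) (Tf V j) p with h | ⟨h1, h2, _⟩ | ⟨h1, h2, _⟩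
      · rw [h] at hp; have := ih2 p hp; omega
      · rw [h2] at hp; omega
      · have := hval p h1; omega
    · -- I3
      intro p hne1 hneV
      rcases kstep_cases (j+1) (Tf V j) p with h | ⟨h1, h2, _⟩ | ⟨h1, h2, _⟩
      · rw [h] at hne1 hneV ⊢
        obtain ⟨a, b⟩ := ih3 p hne1 hneV
        exact ⟨a, by omega⟩
      · have := ih2 p h1
        rw [h2]; constructor <;> omega
      · rw [h2] at hne1; exact absurd rfl hne1
    · -- I4
      intro p q hpq hp1 hq1
      have hp' : Tf V j p = 1 ∨ Tf V j p = j + 1 := by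
        rcases kstep_cases (j+1) (Tf V j) p with h | ⟨h1, h2, _⟩ | ⟨h1, h2, _⟩
        · left; rw [← h]; exact hp1
        · rw [h2] at hp1; omega
        · right; exact h1
      have hq' : Tf V j q = 1 ∨ Tf V j q = j + 1 := by
        rcases kstep_cases (j+1) (Tf V j) q with h | ⟨h1, h2, _⟩ | ⟨h1, h2, _⟩
        · left; rw [← h]; exact hq1
        · rw [h2] at hq1; omega
        · right; exact h1
      rcases hp' with hp' | hp' <;> rcases hq' with hq' | hq'
      · exact ih4 p q hpq hp' hq'
      · have : kstep (j+1) (Tf V j) p = j + 1 :=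
          kstep_fill (j+1) (Tf V j) p hp'
            ⟨q, Relation.ReflTransGen.single ⟨Or.inl hpq, Or.inl hp', Or.inr hq'⟩, hq'⟩
        rw [this] at hp1; omega
      · have : kstep (j+1) (Tf V j) q = j + 1 :=
          kstep_fill (j+1) (Tf V j) q hq'
            ⟨p, Relation.ReflTransGen.single ⟨Or.inr hpq, Or.inl hq', Or.inr hp'⟩, hp'⟩
        rw [this] at hq1; omega
      · have h1 := hval p hp'
        have h2 := hval q hq'
        have := hmono p q hpq.lt; omega
    · -- I5
      intro p hp1 hpb
      rcases kstep_cases (j+1) (Tf V j) p with h | ⟨h1, h2, _⟩ | ⟨h1, h2, h3⟩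
      · rw [h] at hp1; exact ih5 p hp1 hpb
      · rw [h2] at hp1; omega
      · have hVp : V p = j + 1 := hval p h1
        obtain ⟨y, hpath, hy1⟩ := h3
        rcases hpath.cases_head with heq | ⟨w, hrel, _⟩
        · rw [← heq] at hy1; rw [hy1] at h1; omega
        · obtain ⟨hcv, _, hlw⟩ := hrel
          rcases hlw with hw | hw
          · have hVw : V w ≤ j := ih2 w hw
            have hwp : w ⋖ p := by
              rcases hcv with h | h
              · exfalso; have := hmono p w h.lt; omega
              · exact h
            refine ⟨w, hwp, ?_⟩
            rw [hVp]
            simpa using hw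
          · exfalso
            have hVw := hval w hw
            rcases hcv with h | h
            · have := hmono p w h.lt; omega
            · have := hmono w p h.lt; omega
    · -- I6
      intro p hne1 hneV
      rcases kstep_cases (j+1) (Tf V j) p with h | ⟨h1, h2, _⟩ | ⟨h1, h2, _⟩
      · rw [h] at hne1 hneV ⊢
        exact ih6 p hne1 hneV
      · rw [h2]
        constructor
        · simpa using h1
        · rw [Tf_succ V j hj, h2]
      · rw [h2] at hne1; exact absurd rfl hne1

lemma frozen (V : P → ℕ) (c j : ℕ) (p : P) (h2 : 2 ≤ c) (hcj : c ≤ j) (h : Tf V j p = c) :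
    ∀ j', j ≤ j' → Tf V j' p = c := by
  intro j' hjj'
  induction j', hjj' using Nat.le_induction with
  | base => exact h
  | succ j' hj' ih =>
    rw [Tf_succ V j' (by omega)]
    rcases kstep_cases (j'+1) (Tf V j') p with hh | ⟨h1, _, _⟩ | ⟨h1, _, _⟩
    · rw [hh, ih]
    · rw [ih] at h1; omega
    · rw [ih] at h1; omega

lemma absent (V : P → ℕ) (c : ℕ) (hc : c ≠ 1) (h : ∀ p, V p ≠ c) :
    ∀ j p, Tf V j p ≠ c := by
  intro j
  induction j with
  | zero => intro p; rw [Tf_zero]; exact h p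
  | succ j ih =>
    intro p
    by_cases hj : j = 0
    · subst hj; rw [Tf_one]; exact h p
    · rw [Tf_succ V j (by omega)]
      rcases kstep_cases (j+1) (Tf V j) p with hh | ⟨_, h2, y, _, hy⟩ | ⟨_, h2, _⟩
      · rw [hh]; exact ih p
      · rw [h2]; intro hcc; exact ih y (hcc ▸ hy)
      · rw [h2]; exact fun hh => hc hh.symm

lemma noones (V : P → ℕ) (h : ∀ p, V p ≠ 1) : ∀ j p, Tf V j p = V p := by
  intro j
  induction j with
  | zero => intro p; rw [Tf_zero]
  | succ j ih =>
    intro p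
    by_cases hj : j = 0
    · subst hj; rw [Tf_one]
    · rw [Tf_succ V j (by omega)]
      rcases kstep_cases (j+1) (Tf V j) p with hh | ⟨h1, _, _⟩ | ⟨_, _, y, _, hy⟩
      · rw [hh]; exact ih p
      · rw [ih p] at h1; exact absurd h1 (h p)
      · rw [ih y] at hy; exact absurd hy (h y)

lemma exists_lower_cover [Fintype P] (x : P) (hx : x ≠ ⊥) : ∃ w, w ⋖ x := by
  classical
  have hne : (Finset.univ.filter (· < x)).Nonempty :=
    ⟨⊥, by simp [bot_lt_iff_ne_bot.mpr hx]⟩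
  obtain ⟨w, hw, hmax⟩ := Finset.exists_maximal hne
  simp only [Finset.mem_filter, Finset.mem_univ, true_and] at hw
  refine ⟨w, hw, fun c hwc hcx => ?_⟩
  exact lt_irrefl _ (lt_of_lt_of_le hwc (hmax (Finset.mem_filter.mpr ⟨Finset.mem_univ c, hcx⟩) hwc.le))

lemma exists_upper_cover [Fintype P] [OrderTop P] (x : P) (hx : x ≠ ⊤) : ∃ w, x ⋖ w := by
  classical
  have hne : (Finset.univ.filter (x < ·)).Nonempty :=
    ⟨⊤, by simp [lt_top_iff_ne_top.mpr hx]⟩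
  obtain ⟨w, hw, hmin⟩ := Finset.exists_minimal hne
  simp only [Finset.mem_filter, Finset.mem_univ, true_and] at hw
  refine ⟨w, hw, fun c hxc hcw => ?_⟩
  exact lt_irrefl _ (lt_of_le_of_lt (hmin (Finset.mem_filter.mpr ⟨Finset.mem_univ c, hxc⟩) hcw.le) hcw)

end KPromoAux

/-- Let `P` be a finite graded poset with a unique minimum `⊥` and unique maximum `⊤`,
whose bottom tree and top tree intersect.  If an increasing tableau `V` of height `z`
agrees with its `K`-promotion on the doubletree (the set of elements whose principal
ideal or principal filter is a chain), then `z = rank(P) + 1` and `V` is the minimal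
tableau `x ↦ rk x + 1`. -/
theorem minimal_tableau_of_doubletree_fixed {P : Type*} [PartialOrder P] [Fintype P]
    [OrderBot P] [OrderTop P]
    (r : ℕ) (rk : P → ℕ)
    (hmin : rk ⊥ = 0)
    (hcov : ∀ x y : P, x ⋖ y → rk y = rk x + 1)
    (hmax : rk ⊤ = r)
    (hBTTT : ∃ x : P, IsChain (· ≤ ·) {y | y ≤ x} ∧ IsChain (· ≤ ·) {y | x ≤ y})
    (z : ℕ) (V : P → ℕ)
    (hV1 : ∀ p, 1 ≤ V p ∧ V p ≤ z)
    (hVmono : ∀ x y : P, x < y → V x < V y)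
    (hDT : ∀ x : P, (IsChain (· ≤ ·) {y | y ≤ x} ∨ IsChain (· ≤ ·) {y | x ≤ y}) →
      kpromo z V x = V x) :
    z = r + 1 ∧ ∀ x, V x = rk x + 1 := by
  classical
  open KPromoAux in
  have hz1 : 1 ≤ z := le_trans (hV1 ⊥).1 (hV1 ⊥).2
  have hkp : ∀ p : P, kpromo z V p = if Tf V z p = 1 then z else Tf V z p - 1 :=
    fun p => rfl
  have chain_bot : IsChain (· ≤ ·) {y : P | y ≤ ⊥} :=
    fun a ha _ hb _ => Or.inl (le_trans ha bot_le)
  have chain_top : IsChain (· ≤ ·) {y : P | ⊤ ≤ y} :=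
    fun a _ b hb _ => Or.inl (le_trans le_top hb)
  have hdich : ∀ p : P, (IsChain (· ≤ ·) {y | y ≤ p} ∨ IsChain (· ≤ ·) {y | p ≤ y}) →
      (Tf V z p = 1 ∧ V p = z) ∨ Tf V z p = V p + 1 := by
    intro p hp
    have h := hDT p hp
    rw [hkp p] at h
    split_ifs at h with h1
    · exact Or.inl ⟨h1, h.symm⟩
    · right; have := (hV1 p).1; omega
  have hVbot : V ⊥ = 1 := by
    by_contra hb
    have hno : ∀ p : P, V p ≠ 1 := by
      intro p h1
      rcases eq_or_ne p ⊥ with rfl | hp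
      · exact hb h1
      · have := hVmono ⊥ p (bot_lt_iff_ne_bot.mpr hp)
        have := (hV1 ⊥).1; omega
    have hfix := noones V hno z ⊥
    rcases hdich ⊥ (Or.inl chain_bot) with ⟨h1, _⟩ | h2
    · rw [hfix] at h1; exact hno ⊥ h1
    · rw [hfix] at h2; omega
  have hVtop : V ⊤ = z := by
    rcases hdich ⊤ (Or.inr chain_top) with ⟨_, h⟩ | h2
    · exact h
    · exfalso
      have habs : ∀ p : P, V p ≠ V ⊤ + 1 := by
        intro p
        rcases eq_or_ne p ⊤ with rfl | hp
        · omega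
        · have := hVmono p ⊤ (lt_top_iff_ne_top.mpr hp); omega
      exact absent V (V ⊤ + 1) (by have := (hV1 ⊤).1; omega) habs z ⊤ h2
  have hinv := fun (j : ℕ) (hj : 1 ≤ j) =>
    main_inv V (fun p => (hV1 p).1) hVmono j hj
  -- Lemma B : doubletree elements are holes only up to time V w
  have hB : ∀ w : P, (IsChain (· ≤ ·) {y | y ≤ w} ∨ IsChain (· ≤ ·) {y | w ≤ y}) →
      ∀ j, j ≤ z → Tf V j w = 1 → j ≤ V w := by
    intro w hw j hjz h1
    rcases hdich w hw with ⟨_, hz'⟩ | hc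
    · omega
    · have h1w := (hV1 w).1
      have h6 := (hinv z hz1).2.2.2.2.2 w (by rw [hc]; omega) (by rw [hc]; omega)
      have hB2 := h6.2
      rw [hc] at hB2
      by_contra hlt
      have := frozen V (V w + 1) (V w + 1) w (by omega) le_rfl hB2 j (by omega)
      rw [h1] at this; omega
  -- Lemma LC
  have hLC : ∀ p : P, (IsChain (· ≤ ·) {y | y ≤ p} ∨ IsChain (· ≤ ·) {y | p ≤ y}) →
      p ≠ ⊥ → ∃ w, w ⋖ p ∧ Tf V (V p - 1) w = 1 := by
    intro p hp hpbot
    rcases hdich p hp with ⟨h1, _⟩ | hc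
    · exact (hinv z hz1).2.2.2.2.1 p h1 hpbot
    · have h1p := (hV1 p).1
      have h6 := (hinv z hz1).2.2.2.2.2 p (by rw [hc]; omega) (by rw [hc]; omega)
      have hA := h6.1
      rw [hc] at hA
      simp only [Nat.add_sub_cancel] at hA
      exact (hinv (V p) h1p).2.2.2.2.1 p hA hpbot
  -- Lemma LU
  have hLU : ∀ p : P, (IsChain (· ≤ ·) {y | y ≤ p} ∨ IsChain (· ≤ ·) {y | p ≤ y}) →
      V p < z → ∃ y, p ⋖ y ∧ V y = V p + 1 := by
    intro p hp hpz
    rcases hdich p hp with ⟨_, h⟩ | hc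
    · omega
    · have h1p := (hV1 p).1
      have h6 := (hinv z hz1).2.2.2.2.2 p (by rw [hc]; omega) (by rw [hc]; omega)
      obtain ⟨hA, hB2⟩ := h6
      rw [hc] at hA hB2
      simp only [Nat.add_sub_cancel] at hA
      rw [Tf_succ V (V p) h1p] at hB2
      rcases kstep_cases (V p + 1) (Tf V (V p)) p with hh | ⟨_, _, y, hpath, hy⟩ | ⟨h1, _, _⟩
      · rw [hh, hA] at hB2; omega
      · rcases hpath.cases_head with heq | ⟨w, hrel, _⟩
        · rw [← heq, hA] at hy; omega
        · obtain ⟨hcv, _, hlw⟩ := hrel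
          rcases hlw with hw1 | hwc
          · exfalso
            rcases hcv with h | h
            · exact (hinv (V p) h1p).2.2.2.1 p w h hA hw1
            · exact (hinv (V p) h1p).2.2.2.1 w p h hw1 hA
          · have hVw : V w = V p + 1 := by
              by_contra hne
              have h3 := (hinv (V p) h1p).2.2.1 w (by rw [hwc]; omega)
                (fun hh => hne (by rw [← hwc, hh]))
              rw [hwc] at h3; omega
            rcases hcv with h | h
            · exact ⟨w, h, hVw⟩
            · exfalso; have := hVmono w p h.lt; omega
      · rw [hA] at h1; omega
  obtain ⟨x0, hx0I, hx0F⟩ := hBTTT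
  have hIdt : ∀ p : P, p ≤ x0 →
      (IsChain (· ≤ ·) {y | y ≤ p} ∨ IsChain (· ≤ ·) {y | p ≤ y}) :=
    fun p hp => Or.inl (fun a ha b hb hab =>
      hx0I (le_trans ha hp) (le_trans hb hp) hab)
  have hFdt : ∀ p : P, x0 ≤ p →
      (IsChain (· ≤ ·) {y | y ≤ p} ∨ IsChain (· ≤ ·) {y | p ≤ y}) :=
    fun p hp => Or.inr (fun a ha b hb hab =>
      hx0F (le_trans hp ha) (le_trans hp hb) hab)
  have hideal : ∀ n, ∀ p : P, p ≤ x0 → V p ≤ n → V p = rk p + 1 := by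
    intro n
    induction n with
    | zero => intro p _ h0; have := (hV1 p).1; omega
    | succ n ih =>
      intro p hpx hn
      rcases eq_or_ne p ⊥ with rfl | hpb
      · rw [hVbot, hmin]
      · obtain ⟨w, hwp, hw1⟩ := hLC p (hIdt p hpx) hpb
        have hwx : w ≤ x0 := le_trans hwp.lt.le hpx
        have hVw : V w < V p := hVmono w p hwp.lt
        have hj : V p - 1 ≤ z := by have := (hV1 p).2; omega
        have hle := hB w (hIdt w hwx) (V p - 1) hj hw1
        have hrw := ih w hwx (by omega)
        rw [hcov w p hwp]
        omega
  have hfilt : ∀ n, ∀ p : P, x0 ≤ p → z - V p ≤ n → V p + r = z + rk p := by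
    intro n
    induction n with
    | zero =>
      intro p hpx h0
      rcases eq_or_ne p ⊤ with rfl | hpt
      · rw [hmax, hVtop]
      · exfalso
        have h1 : V p < z := by
          rw [← hVtop]; exact hVmono p ⊤ (lt_top_iff_ne_top.mpr hpt)
        omega
    | succ n ih =>
      intro p hpx hn
      rcases eq_or_ne p ⊤ with rfl | hpt
      · rw [hmax, hVtop]
      · have hpz : V p < z := by
          rw [← hVtop]; exact hVmono p ⊤ (lt_top_iff_ne_top.mpr hpt)
        obtain ⟨y, hpy, hVy⟩ := hLU p (hFdt p hpx) hpz
        have hyx : x0 ≤ y := le_trans hpx hpy.lt.le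
        have hyz : V y ≤ z := (hV1 y).2
        have hihy := ih y hyx (by omega)
        rw [hcov p y hpy] at hihy
        omega
  have hx0a : V x0 = rk x0 + 1 := hideal (V x0) x0 le_rfl le_rfl
  have hx0b : V x0 + r = z + rk x0 := hfilt z x0 le_rfl (by omega)
  have hzr : z = r + 1 := by omega
  have hlb : ∀ n, ∀ x : P, V x ≤ n → rk x + 1 ≤ V x := by
    intro n
    induction n with
    | zero => intro x hx; have := (hV1 x).1; omega
    | succ n ih =>
      intro x hx
      rcases eq_or_ne x ⊥ with rfl | hxb
      · rw [hmin]; have := (hV1 ⊥).1; omega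
      · obtain ⟨w, hw⟩ := exists_lower_cover x hxb
        have h1 := hVmono w x hw.lt
        have h2 := ih w (by omega)
        rw [hcov w x hw]; omega
  have hub : ∀ n, ∀ x : P, z - V x ≤ n → V x + r ≤ z + rk x := by
    intro n
    induction n with
    | zero =>
      intro x hx
      rcases eq_or_ne x ⊤ with rfl | hxt
      · rw [hmax]; omega
      · have h1 : V x < z := by
          rw [← hVtop]; exact hVmono x ⊤ (lt_top_iff_ne_top.mpr hxt)
        omega
    | succ n ih =>
      intro x hx
      rcases eq_or_ne x ⊤ with rfl | hxt
      · rw [hmax]; omega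
      · have hxz : V x < z := by
          rw [← hVtop]; exact hVmono x ⊤ (lt_top_iff_ne_top.mpr hxt)
        obtain ⟨y, hy⟩ := exists_upper_cover x hxt
        have h1 := hVmono x y hy.lt
        have h2 : V y ≤ z := (hV1 y).2
        have h3 := ih y (by omega)
        rw [hcov x y hy] at h3; omega
  refine ⟨hzr, fun x => ?_⟩
  have ha := hlb (V x) x le_rfl
  have hb2 := hub z x (by omega)
  omega
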